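/- For any two probability measures M and N, the chi-squared divergence admits the integral representation χ²(M‖N) = 2 ∫₁^∞ [E_γ(M‖N) + γ^{-3} E_γ(N‖M)] dγ. -/

import Mathlib

open MeasureTheory

open Set
open scoped ENNReal


lemma aux_J1 {a b : ℝ} (ha : 0 ≤ a) (hb : 0 ≤ b) (hab : b = 0 → a = 0) :
    IntegrableOn (fun γ : ℝ => max (a - γ * b) 0) (Set.Ioi 1) volume ∧
    ∫ γ in Set.Ioi (1:ℝ), max (a - γ * b) 0 = (max (a - b) 0) ^ 2 / (2 * b) := by
  rcases hb.eq_or_lt with hb0 | hb0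
  · have ha0 : a = 0 := hab hb0.symm
    simp [ha0, ← hb0]
  · rcases le_or_gt a b with hle | hlt
    · have hzero : ∀ γ ∈ Set.Ioi (1:ℝ), max (a - γ * b) 0 = 0 := by
        intro γ hγ
        rw [Set.mem_Ioi] at hγ
        rw [max_eq_right]
        nlinarith
      constructor
      · exact (integrableOn_congr_fun hzero measurableSet_Ioi).mpr (integrableOn_zero)
      · rw [setIntegral_congr_fun measurableSet_Ioi hzero]
        simp [max_eq_right (by linarith : a - b ≤ 0)]
  
    · set s := a / b with hs
      have hs1 : 1 < s := (one_lt_div hb0).2 hlt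
      have hunion : Set.Ioc (1:ℝ) s ∪ Set.Ioi s = Set.Ioi 1 := Set.Ioc_union_Ioi_eq_Ioi hs1.le
      have hInt1 : IntegrableOn (fun γ : ℝ => max (a - γ * b) 0) (Set.Ioc 1 s) volume :=
        ((continuous_const.sub (continuous_id.mul continuous_const)).max continuous_const).integrableOn_Ioc
      have hzero : ∀ γ ∈ Set.Ioi s, max (a - γ * b) 0 = 0 := by
        intro γ hγ
        rw [Set.mem_Ioi] at hγ
        have : a < γ * b := by
          have := (div_lt_iff₀ hb0).1 hγ
          linarith [this]
        rw [max_eq_right (by linarith)]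
      have hInt2 : IntegrableOn (fun γ : ℝ => max (a - γ * b) 0) (Set.Ioi s) volume :=
        (integrableOn_congr_fun hzero measurableSet_Ioi).mpr integrableOn_zero
      have hIntAll : IntegrableOn (fun γ : ℝ => max (a - γ * b) 0) (Set.Ioi 1) volume := by
        rw [← hunion]; exact hInt1.union hInt2
      refine ⟨hIntAll, ?_⟩
      rw [← hunion, setIntegral_union (Set.Ioc_disjoint_Ioi le_rfl) measurableSet_Ioi hInt1 hInt2,
        setIntegral_congr_fun measurableSet_Ioi hzero]
      simp only [integral_zero, add_zero]
      have heq : Set.EqOn (fun γ : ℝ => max (a - γ * b) 0) (fun γ : ℝ => a - γ * b) (Set.Ioc 1 s) := by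
        intro γ hγ
        have : γ * b ≤ a := by
          have := (le_div_iff₀ hb0).1 hγ.2
          linarith
        exact max_eq_left (by linarith)
      rw [setIntegral_congr_fun measurableSet_Ioc heq, ← intervalIntegral.integral_of_le hs1.le,
        intervalIntegral.integral_sub intervalIntegrable_const
          (intervalIntegral.intervalIntegrable_id.mul_const b),
        intervalIntegral.integral_const, intervalIntegral.integral_mul_const, integral_id,
        max_eq_left (by linarith : (0:ℝ) ≤ a - b)]
      have hbne : b ≠ 0 := ne_of_gt hb0
      rw [hs]
      field_simp
      ring_nf
      field_simp
      ring


lemma aux_J2 {a b : ℝ} (ha : 0 ≤ a) (hb : 0 ≤ b) :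
    IntegrableOn (fun γ : ℝ => γ ^ (-(3:ℝ)) * max (b - γ * a) 0) (Set.Ioi 1) volume ∧
    ∫ γ in Set.Ioi (1:ℝ), γ ^ (-(3:ℝ)) * max (b - γ * a) 0 = (max (b - a) 0) ^ 2 / (2 * b) := by
  rcases ha.eq_or_lt with ha0 | ha0
  · have heq : ∀ γ : ℝ, γ ^ (-(3:ℝ)) * max (b - γ * a) 0 = γ ^ (-(3:ℝ)) * b := by
      intro γ; rw [← ha0, mul_zero, sub_zero, max_eq_left hb]
    simp only [heq]
    constructor
    · exact (integrableOn_Ioi_rpow_of_lt (by norm_num) one_pos).mul_const b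
    · rw [integral_mul_const, integral_Ioi_rpow_of_lt (by norm_num) one_pos]
      rw [← ha0]
      rcases hb.eq_or_lt with hb0 | hb0
      · simp [← hb0]
      · rw [max_eq_left (by linarith)]
        rw [Real.one_rpow]
        field_simp
        ring
  · rcases le_or_gt b a with hle | hlt
    · have hzero : ∀ γ ∈ Set.Ioi (1:ℝ), γ ^ (-(3:ℝ)) * max (b - γ * a) 0 = 0 := by
        intro γ hγ
        rw [Set.mem_Ioi] at hγ
        have : b - γ * a < 0 := by nlinarith
        rw [max_eq_right this.le, mul_zero]
      constructor
      · exact (integrableOn_congr_fun hzero measurableSet_Ioi).mpr integrableOn_zero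
      · rw [setIntegral_congr_fun measurableSet_Ioi hzero]
        simp [max_eq_right (by linarith : b - a ≤ 0)]
    · set s := b / a with hs
      have hs1 : 1 < s := (one_lt_div ha0).2 hlt
      have hb0 : 0 < b := lt_trans ha0 hlt
      have hunion : Set.Ioc (1:ℝ) s ∪ Set.Ioi s = Set.Ioi 1 := Set.Ioc_union_Ioi_eq_Ioi hs1.le
      have hcont : ContinuousOn (fun γ : ℝ => γ ^ (-(3:ℝ)) * max (b - γ * a) 0) (Set.Icc 1 s) := by
        apply ContinuousOn.mul
        · exact continuousOn_id.rpow_const fun x hx => Or.inl (by linarith [hx.1] : x ≠ 0)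
        · exact ((continuous_const.sub (continuous_id.mul continuous_const)).max continuous_const).continuousOn
      have hInt1 : IntegrableOn (fun γ : ℝ => γ ^ (-(3:ℝ)) * max (b - γ * a) 0) (Set.Ioc 1 s) volume :=
        (hcont.integrableOn_Icc).mono_set Set.Ioc_subset_Icc_self
      have hzero : ∀ γ ∈ Set.Ioi s, γ ^ (-(3:ℝ)) * max (b - γ * a) 0 = 0 := by
        intro γ hγ
        rw [Set.mem_Ioi] at hγ
        have : b < γ * a := by
          have := (div_lt_iff₀ ha0).1 hγ
          linarith
        rw [max_eq_right (by linarith), mul_zero]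
      have hInt2 : IntegrableOn (fun γ : ℝ => γ ^ (-(3:ℝ)) * max (b - γ * a) 0) (Set.Ioi s) volume :=
        (integrableOn_congr_fun hzero measurableSet_Ioi).mpr integrableOn_zero
      have hIntAll : IntegrableOn (fun γ : ℝ => γ ^ (-(3:ℝ)) * max (b - γ * a) 0) (Set.Ioi 1) volume := by
        rw [← hunion]; exact hInt1.union hInt2
      refine ⟨hIntAll, ?_⟩
      rw [← hunion, setIntegral_union (Set.Ioc_disjoint_Ioi le_rfl) measurableSet_Ioi hInt1 hInt2,
        setIntegral_congr_fun measurableSet_Ioi hzero]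
      simp only [integral_zero, add_zero]
      have heq : Set.EqOn (fun γ : ℝ => γ ^ (-(3:ℝ)) * max (b - γ * a) 0)
          (fun γ : ℝ => b * γ ^ (-(3:ℝ)) - a * γ ^ (-(2:ℝ))) (Set.Ioc 1 s) := by
        intro γ hγ
        have hγ0 : (0:ℝ) < γ := by linarith [hγ.1]
        have hmax : max (b - γ * a) 0 = b - γ * a := by
          have := (le_div_iff₀ ha0).1 hγ.2
          exact max_eq_left (by linarith)
        have hpow : γ ^ (-(3:ℝ)) * γ = γ ^ (-(2:ℝ)) := by
          nth_rewrite 2 [← Real.rpow_one γ]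
          rw [← Real.rpow_add hγ0]
          norm_num
        simp only [hmax]
        calc γ ^ (-(3:ℝ)) * (b - γ * a) = b * γ ^ (-(3:ℝ)) - a * (γ ^ (-(3:ℝ)) * γ) := by ring
          _ = b * γ ^ (-(3:ℝ)) - a * γ ^ (-(2:ℝ)) := by rw [hpow]
      rw [setIntegral_congr_fun measurableSet_Ioc heq, ← intervalIntegral.integral_of_le hs1.le]
      have h0uIcc : (0:ℝ) ∉ Set.uIcc (1:ℝ) s := Set.notMem_uIcc_of_lt one_pos (by linarith)
      have hi3 : IntervalIntegrable (fun γ : ℝ => γ ^ (-(3:ℝ))) volume 1 s := by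
        apply intervalIntegral.intervalIntegrable_rpow (Or.inr h0uIcc)
      have hi2 : IntervalIntegrable (fun γ : ℝ => γ ^ (-(2:ℝ))) volume 1 s := by
        apply intervalIntegral.intervalIntegrable_rpow (Or.inr h0uIcc)
      rw [intervalIntegral.integral_sub (hi3.const_mul b) (hi2.const_mul a),
        intervalIntegral.integral_const_mul, intervalIntegral.integral_const_mul,
        integral_rpow (Or.inr ⟨by norm_num, h0uIcc⟩), integral_rpow (Or.inr ⟨by norm_num, h0uIcc⟩)]
      have hs0 : (0:ℝ) < s := by linarith
      have e2 : s ^ ((-(3:ℝ)) + 1) = (s ^ 2)⁻¹ := by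
        rw [show (-(3:ℝ)) + 1 = ((-2 : ℤ) : ℝ) by norm_num, Real.rpow_intCast]
        simp [zpow_neg]
      have e1 : s ^ ((-(2:ℝ)) + 1) = s⁻¹ := by
        rw [show (-(2:ℝ)) + 1 = ((-1 : ℤ) : ℝ) by norm_num, Real.rpow_intCast]
        simp
      rw [e2, e1, Real.one_rpow, Real.one_rpow, max_eq_left (by linarith : (0:ℝ) ≤ b - a), hs]
      have hane : a ≠ 0 := ne_of_gt ha0
      have hbne : b ≠ 0 := ne_of_gt hb0
      field_simp
      ring


lemma sigmaFinite_restrict_pos {α : Type*} [MeasurableSpace α] {μ : Measure α} {h : α → ℝ}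
    (hm : Measurable h) (hi : Integrable h μ) :
    SigmaFinite (μ.restrict {x | 0 < h x}) := by
  have hSmeas : MeasurableSet {x | 0 < h x} := measurableSet_lt measurable_const hm
  refine ⟨⟨⟨fun n => {x | 1 / (n + 1 : ℝ) ≤ h x} ∪ {x | 0 < h x}ᶜ, fun _ => trivial, fun n => ?_, ?_⟩⟩⟩
  · have hA : MeasurableSet {x | 1 / (n + 1 : ℝ) ≤ h x} := measurableSet_le measurable_const hm
    rw [Measure.restrict_apply (hA.union hSmeas.compl)]
    refine lt_of_le_of_lt (measure_mono ?_) (hi.measure_ge_lt_top (by positivity : (0:ℝ) < 1 / (n + 1)))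
    rintro x ⟨hx | hx, hxS⟩
    · exact hx
    · exact absurd hxS hx
  · apply Set.eq_univ_of_forall
    intro x
    simp only [Set.mem_iUnion, Set.mem_union, Set.mem_setOf_eq, Set.mem_compl_iff]
    by_cases hx : 0 < h x
    · obtain ⟨n, hn⟩ := exists_nat_one_div_lt hx
      exact ⟨n, Or.inl (by exact_mod_cast hn.le)⟩
    · exact ⟨0, Or.inr hx⟩

-- pointwise combined lemma
lemma aux_point {a b : ℝ} (ha : 0 ≤ a) (hb : 0 ≤ b) (hab : b = 0 → a = 0) :
    IntegrableOn (fun γ : ℝ => max (a - γ * b) 0 + γ ^ (-(3:ℝ)) * max (b - γ * a) 0)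
      (Set.Ioi 1) volume ∧
    ∫ γ in Set.Ioi (1:ℝ), (max (a - γ * b) 0 + γ ^ (-(3:ℝ)) * max (b - γ * a) 0)
      = (a - b) ^ 2 / (2 * b) := by
  obtain ⟨hI1, hE1⟩ := aux_J1 ha hb hab
  obtain ⟨hI2, hE2⟩ := aux_J2 ha hb
  refine ⟨hI1.add hI2, ?_⟩
  rw [integral_add hI1 hI2, hE1, hE2, ← add_div]
  congr 1
  rcases le_total a b with hle | hle
  · rw [max_eq_right (by linarith), max_eq_left (by linarith)]
    ring
  · rw [max_eq_left (by linarith), max_eq_right (by linarith)]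
    ring

/-- Integral representation of the chi-squared divergence in terms of
hockey-stick divergences: for probability measures M ≪ N with densities f, g
with respect to a common dominating measure μ,
χ²(M‖N) = 2∫₁^∞ [E_γ(M‖N) + γ^{-3} E_γ(N‖M)] dγ, where
χ²(M‖N) = ∫ (f - g)²/g dμ and E_γ(M‖N) = ∫ (f - γ g)₊ dμ. -/
theorem stmt4 {α : Type*} [MeasurableSpace α] (μ : Measure α) (f g : α → ℝ)
    (hf : Measurable f) (hg : Measurable g)
    (hf0 : ∀ x, 0 ≤ f x) (hg0 : ∀ x, 0 ≤ g x)
    (hfi : Integrable f μ) (hgi : Integrable g μ)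
    (hf1 : ∫ x, f x ∂μ = 1) (hg1 : ∫ x, g x ∂μ = 1)
    (hac : ∀ x, g x = 0 → f x = 0) :
    ∫ x, (f x - g x) ^ 2 / g x ∂μ
      = 2 * ∫ γ in Set.Ioi (1 : ℝ),
          ((∫ x, max (f x - γ * g x) 0 ∂μ)
            + γ ^ (-(3 : ℝ)) * ∫ x, max (g x - γ * f x) 0 ∂μ) := by
  classical
  set S : Set α := {x | 0 < f x + g x} with hSdef
  have hSzero : ∀ x ∉ S, f x = 0 ∧ g x = 0 := by
    intro x hx
    simp only [hSdef, Set.mem_setOf_eq, not_lt] at hx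
    constructor <;> nlinarith [hf0 x, hg0 x]
  haveI : SigmaFinite (μ.restrict S) := sigmaFinite_restrict_pos (hf.add hg) (hfi.add hgi)
  set ν : Measure α := μ.restrict S with hνdef
  -- move from μ to ν
  have hrw1 : ∫ x, (f x - g x) ^ 2 / g x ∂μ = ∫ x, (f x - g x) ^ 2 / g x ∂ν := by
    refine (setIntegral_eq_integral_of_forall_compl_eq_zero fun x hx => ?_).symm
    obtain ⟨hfx, hgx⟩ := hSzero x hx
    simp [hfx, hgx]
  have hrw2 : ∀ γ : ℝ, ∫ x, max (f x - γ * g x) 0 ∂μ = ∫ x, max (f x - γ * g x) 0 ∂ν := by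
    intro γ
    refine (setIntegral_eq_integral_of_forall_compl_eq_zero fun x hx => ?_).symm
    obtain ⟨hfx, hgx⟩ := hSzero x hx
    simp [hfx, hgx]
  have hrw3 : ∀ γ : ℝ, ∫ x, max (g x - γ * f x) 0 ∂μ = ∫ x, max (g x - γ * f x) 0 ∂ν := by
    intro γ
    refine (setIntegral_eq_integral_of_forall_compl_eq_zero fun x hx => ?_).symm
    obtain ⟨hfx, hgx⟩ := hSzero x hx
    simp [hfx, hgx]
  simp only [hrw1, hrw2, hrw3]
  -- integrability of inner integrands for every γ
  have hfiν : Integrable f ν := hfi.restrict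
  have hgiν : Integrable g ν := hgi.restrict
  have hAi : ∀ γ : ℝ, Integrable (fun x => max (f x - γ * g x) 0) ν := by
    intro γ
    refine Integrable.mono (hfiν.add (hgiν.const_mul |γ|)) ((hf.sub (hg.const_mul γ)).max measurable_const).aestronglyMeasurable ?_
    filter_upwards with x
    rw [Real.norm_eq_abs, abs_of_nonneg (le_max_right _ _), Real.norm_eq_abs]
    have h1 : max (f x - γ * g x) 0 ≤ f x + |γ| * g x := by
      apply max_le
      · have : -(|γ| * g x) ≤ γ * g x := by
          rw [← neg_mul]
          exact mul_le_mul_of_nonneg_right (neg_abs_le γ) (hg0 x)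
        linarith
      · nlinarith [hf0 x, hg0 x, abs_nonneg γ]
    exact h1.trans (le_abs_self _)
  have hBi : ∀ γ : ℝ, Integrable (fun x => max (g x - γ * f x) 0) ν := by
    intro γ
    refine Integrable.mono (hgiν.add (hfiν.const_mul |γ|)) ((hg.sub (hf.const_mul γ)).max measurable_const).aestronglyMeasurable ?_
    filter_upwards with x
    rw [Real.norm_eq_abs, abs_of_nonneg (le_max_right _ _), Real.norm_eq_abs]
    have h1 : max (g x - γ * f x) 0 ≤ g x + |γ| * f x := by
      apply max_le
      · have : -(|γ| * f x) ≤ γ * f x := by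
          rw [← neg_mul]
          exact mul_le_mul_of_nonneg_right (neg_abs_le γ) (hf0 x)
        linarith
      · nlinarith [hf0 x, hg0 x, abs_nonneg γ]
    exact h1.trans (le_abs_self _)
  -- antitonicity and measurability of the outer integrands
  have hA_anti : Antitone (fun γ : ℝ => ∫ x, max (f x - γ * g x) 0 ∂ν) := by
    intro γ γ' hγ
    apply integral_mono (hAi γ') (hAi γ)
    intro x
    exact max_le_max (by nlinarith [mul_le_mul_of_nonneg_right hγ (hg0 x)]) le_rfl
  have hB_anti : Antitone (fun γ : ℝ => ∫ x, max (g x - γ * f x) 0 ∂ν) := by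
    intro γ γ' hγ
    apply integral_mono (hBi γ') (hBi γ)
    intro x
    exact max_le_max (by nlinarith [mul_le_mul_of_nonneg_right hγ (hf0 x)]) le_rfl
  have hrpow_meas : Measurable fun γ : ℝ => γ ^ (-(3:ℝ)) := by fun_prop
  have hH_meas : Measurable (fun γ : ℝ => (∫ x, max (f x - γ * g x) 0 ∂ν)
      + γ ^ (-(3:ℝ)) * ∫ x, max (g x - γ * f x) 0 ∂ν) :=
    hA_anti.measurable.add (hrpow_meas.mul hB_anti.measurable)
  -- pointwise lintegral identity
  have hpt : ∀ x : α, ∫⁻ γ in Set.Ioi (1:ℝ), ENNReal.ofReal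
      (max (f x - γ * g x) 0 + γ ^ (-(3:ℝ)) * max (g x - γ * f x) 0)
      = ENNReal.ofReal ((f x - g x) ^ 2 / (2 * g x)) := by
    intro x
    obtain ⟨hI, hE⟩ := aux_point (hf0 x) (hg0 x) (hac x)
    rw [← ofReal_integral_eq_lintegral_ofReal hI
      ((ae_restrict_iff' measurableSet_Ioi).2 (Filter.Eventually.of_forall fun γ hγ =>
        add_nonneg (le_max_right _ _) (mul_nonneg
          (Real.rpow_nonneg (by linarith [Set.mem_Ioi.1 hγ]) _) (le_max_right _ _)))), hE]
  -- measurability of the product integrand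
  have hprod_meas : Measurable fun p : α × ℝ => ENNReal.ofReal
      (max (f p.1 - p.2 * g p.1) 0 + p.2 ^ (-(3:ℝ)) * max (g p.1 - p.2 * f p.1) 0) := by
    apply ENNReal.measurable_ofReal.comp
    apply Measurable.add
    · exact ((hf.comp measurable_fst).sub (measurable_snd.mul (hg.comp measurable_fst))).max measurable_const
    · exact (hrpow_meas.comp measurable_snd).mul
        (((hg.comp measurable_fst).sub (measurable_snd.mul (hf.comp measurable_fst))).max measurable_const)
  -- the key lintegral identity
  have key : ∫⁻ x, ENNReal.ofReal ((f x - g x) ^ 2 / g x) ∂ν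
      = 2 * ∫⁻ γ in Set.Ioi (1:ℝ), ENNReal.ofReal ((∫ x, max (f x - γ * g x) 0 ∂ν)
          + γ ^ (-(3:ℝ)) * ∫ x, max (g x - γ * f x) 0 ∂ν) := by
    have hdivmeas : Measurable fun x => (f x - g x) ^ 2 / (2 * g x) :=
      ((hf.sub hg).pow_const 2).div (measurable_const.mul hg)
    calc ∫⁻ x, ENNReal.ofReal ((f x - g x) ^ 2 / g x) ∂ν
        = ∫⁻ x, 2 * ENNReal.ofReal ((f x - g x) ^ 2 / (2 * g x)) ∂ν := by
          apply lintegral_congr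
          intro x
          have h2 : (2 : ℝ≥0∞) = ENNReal.ofReal (2:ℝ) := by simp
          rw [h2, ← ENNReal.ofReal_mul (by norm_num : (0:ℝ) ≤ 2)]
          congr 1
          rcases eq_or_ne (g x) 0 with h | h
          · simp [h]
          · field_simp
      _ = 2 * ∫⁻ x, ENNReal.ofReal ((f x - g x) ^ 2 / (2 * g x)) ∂ν :=
          lintegral_const_mul 2 (ENNReal.measurable_ofReal.comp hdivmeas)
      _ = 2 * ∫⁻ x, (∫⁻ γ in Set.Ioi (1:ℝ), ENNReal.ofReal
            (max (f x - γ * g x) 0 + γ ^ (-(3:ℝ)) * max (g x - γ * f x) 0)) ∂ν := by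
          congr 1
          exact (lintegral_congr fun x => (hpt x)).symm
      _ = 2 * ∫⁻ γ in Set.Ioi (1:ℝ), (∫⁻ x, ENNReal.ofReal
            (max (f x - γ * g x) 0 + γ ^ (-(3:ℝ)) * max (g x - γ * f x) 0) ∂ν) := by
          congr 1
          exact lintegral_lintegral_swap hprod_meas.aemeasurable
      _ = 2 * ∫⁻ γ in Set.Ioi (1:ℝ), ENNReal.ofReal ((∫ x, max (f x - γ * g x) 0 ∂ν)
            + γ ^ (-(3:ℝ)) * ∫ x, max (g x - γ * f x) 0 ∂ν) := by
          congr 1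
          apply setLIntegral_congr_fun measurableSet_Ioi
          intro γ hγ
          have hγ0 : (0:ℝ) ≤ γ := by linarith [Set.mem_Ioi.1 hγ]
          have hr : (0:ℝ) ≤ γ ^ (-(3:ℝ)) := Real.rpow_nonneg hγ0 _
          have hint2 : Integrable (fun x => γ ^ (-(3:ℝ)) * max (g x - γ * f x) 0) ν :=
            (hBi γ).const_mul _
          beta_reduce
          rw [show (fun x => ENNReal.ofReal (max (f x - γ * g x) 0
              + γ ^ (-(3:ℝ)) * max (g x - γ * f x) 0))
              = fun x => ENNReal.ofReal (max (f x - γ * g x) 0)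
                + ENNReal.ofReal (γ ^ (-(3:ℝ)) * max (g x - γ * f x) 0) from
            funext fun x => ENNReal.ofReal_add (le_max_right _ _)
              (mul_nonneg hr (le_max_right _ _))]
          have hm1 : Measurable fun x => ENNReal.ofReal (max (f x - γ * g x) 0) :=
            ENNReal.measurable_ofReal.comp
              ((hf.sub (measurable_const.mul hg)).max measurable_const)
          rw [lintegral_add_left hm1]
          rw [← ofReal_integral_eq_lintegral_ofReal (hAi γ)
              (Filter.Eventually.of_forall fun x => le_max_right _ _),
            ← ofReal_integral_eq_lintegral_ofReal hint2
              (Filter.Eventually.of_forall fun x => mul_nonneg hr (le_max_right _ _)),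
            MeasureTheory.integral_const_mul]
          have h1 : (0:ℝ) ≤ ∫ x, max (f x - γ * g x) 0 ∂ν :=
            integral_nonneg fun x => le_max_right _ _
          have h2 : (0:ℝ) ≤ γ ^ (-(3:ℝ)) * ∫ x, max (g x - γ * f x) 0 ∂ν :=
            mul_nonneg hr (integral_nonneg fun x => le_max_right _ _)
          exact (ENNReal.ofReal_add h1 h2).symm
  -- convert both sides via lintegrals
  have hLHS : ∫ x, (f x - g x) ^ 2 / g x ∂ν
      = (∫⁻ x, ENNReal.ofReal ((f x - g x) ^ 2 / g x) ∂ν).toReal :=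
    integral_eq_lintegral_of_nonneg_ae
      (Filter.Eventually.of_forall fun x => div_nonneg (sq_nonneg _) (hg0 x))
      (((hf.sub hg).pow_const 2).div hg).aestronglyMeasurable
  have hRHS : ∫ γ in Set.Ioi (1:ℝ), ((∫ x, max (f x - γ * g x) 0 ∂ν)
        + γ ^ (-(3:ℝ)) * ∫ x, max (g x - γ * f x) 0 ∂ν)
      = (∫⁻ γ in Set.Ioi (1:ℝ), ENNReal.ofReal ((∫ x, max (f x - γ * g x) 0 ∂ν)
        + γ ^ (-(3:ℝ)) * ∫ x, max (g x - γ * f x) 0 ∂ν)).toReal :=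
    integral_eq_lintegral_of_nonneg_ae
      ((ae_restrict_iff' measurableSet_Ioi).2 (Filter.Eventually.of_forall fun γ hγ =>
        add_nonneg (integral_nonneg fun x => le_max_right _ _)
          (mul_nonneg (Real.rpow_nonneg (by linarith [Set.mem_Ioi.1 hγ]) _)
            (integral_nonneg fun x => le_max_right _ _))))
      hH_meas.aestronglyMeasurable
  rw [hLHS, hRHS, key, ENNReal.toReal_mul]
  norm_num
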